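/- Fix γ ∈ Γ with Γ infinite, and let K = σ_1(Γ)^ω. For n ≥ 1 set K_n = {x ∈ K : γ ∈ x_j for all j < n−1 and γ ∉ x_{n−1}} (indices 0-based: γ belongs to the first n−1 coordinates but not the n-th). Then the K_n are pairwise disjoint clopen subsets of K, each homeomorphic to K, their union is K minus the single point (({γ},{γ},{γ},…)), and K is the one-point compactification of ⨁_n K_n. Consequently K is homeomorphic to the one-point compactification of the disjoint sum of countably many copies of K. -/

import Mathlib

def sigmaSet (Γ : Type*) (n : ℕ) : Set (Γ → Bool) :=
  {x | {γ | x γ = true}.Finite ∧ {γ | x γ = true}.ncard ≤ n}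

/-- The singleton `{l}` as an element of `σ_1(Λ)`. -/
def singElt {Λ : Type*} [DecidableEq Λ] (l : Λ) : sigmaSet Λ 1 := by
  refine ⟨fun γ => decide (γ = l), ?_⟩
  have h : {γ : Λ | decide (γ = l) = true} = {l} := by ext γ; simp
  constructor
  · rw [h]; exact Set.finite_singleton l
  · rw [h]; simp

/-- The clopen set `K_n = {x ∈ σ_1(Γ)^ω : γ ∈ x_j for j < n, γ ∉ x_n}` (0-based, so this is
the `n+1`-st set of the paper). -/
def Kset {Γ : Type*} (γ : Γ) (n : ℕ) : Set (ℕ → sigmaSet Γ 1) :=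
  {x | (∀ j < n, (x j : Γ → Bool) γ = true) ∧ (x n : Γ → Bool) γ = false}

section Aux

lemma mem_sigmaSet_one_iff {Γ : Type*} (y : Γ → Bool) :
    y ∈ sigmaSet Γ 1 ↔ ∀ a b, y a = true → y b = true → a = b := by
  constructor
  · rintro ⟨hf, hc⟩ a b ha hb
    exact (Set.ncard_le_one_iff hf).mp hc ha hb
  · intro h
    have hs : ({γ | y γ = true} : Set Γ).Subsingleton := fun a ha b hb => h a b ha hb
    exact ⟨hs.finite, (Set.ncard_le_one_iff hs.finite).mpr fun ha hb => h _ _ ha hb⟩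

lemma eq_singElt {Γ : Type*} [DecidableEq Γ] {γ : Γ} (y : sigmaSet Γ 1)
    (h : (y : Γ → Bool) γ = true) : y = singElt γ := by
  apply Subtype.ext
  funext δ
  show (y : Γ → Bool) δ = decide (δ = γ)
  by_cases hδ : δ = γ
  · subst hδ; simp [h]
  · have hy : (y : Γ → Bool) δ = false := by
      by_contra hyδ
      exact hδ ((mem_sigmaSet_one_iff _).mp y.2 δ γ (by simpa using hyδ) h)
    simp [hy, hδ]

lemma singElt_coe {Γ : Type*} [DecidableEq Γ] (γ : Γ) :
    (singElt γ : Γ → Bool) γ = true := by simp [singElt]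

lemma isClosed_sigmaSet_one (Γ : Type*) : IsClosed (sigmaSet Γ 1) := by
  have h : sigmaSet Γ 1 =
      ⋂ (a : Γ) (b : Γ), {y : Γ → Bool | y a = true → y b = true → a = b} := by
    ext y
    constructor
    · intro hy
      simp only [Set.mem_iInter, Set.mem_setOf_eq]
      exact fun a b => (mem_sigmaSet_one_iff y).mp hy a b
    · intro hy
      exact (mem_sigmaSet_one_iff y).mpr fun a b =>
        Set.mem_iInter.mp (Set.mem_iInter.mp hy a) b
  rw [h]
  refine isClosed_iInter fun a => isClosed_iInter fun b => ?_
  by_cases hab : a = b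
  · have : {y : Γ → Bool | y a = true → y b = true → a = b} = Set.univ := by
      ext y; simp [hab]
    rw [this]; exact isClosed_univ
  · have : {y : Γ → Bool | y a = true → y b = true → a = b} =
        ({y : Γ → Bool | y a = true} ∩ {y : Γ → Bool | y b = true})ᶜ := by
      ext y
      simp only [Set.mem_setOf_eq, Set.mem_compl_iff, Set.mem_inter_iff, not_and]
      tauto
    rw [this]
    refine IsOpen.isClosed_compl (IsOpen.inter ?_ ?_)
    · show IsOpen ((fun y : Γ → Bool => y a) ⁻¹' {true})
      exact (isOpen_discrete _).preimage (continuous_apply a)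
    · show IsOpen ((fun y : Γ → Bool => y b) ⁻¹' {true})
      exact (isOpen_discrete _).preimage (continuous_apply b)

instance compactSpace_sigmaSet_one (Γ : Type*) : CompactSpace (sigmaSet Γ 1) :=
  isCompact_iff_compactSpace.mp ((isClosed_sigmaSet_one Γ).isCompact)

/-- A sigma congruence homeomorphism. -/
def sigmaCongrRightHomeo {ι : Type*} {X Y : ι → Type*} [∀ i, TopologicalSpace (X i)]
    [∀ i, TopologicalSpace (Y i)] (e : ∀ i, X i ≃ₜ Y i) : (Σ i, X i) ≃ₜ Σ i, Y i where
  toEquiv := Equiv.sigmaCongrRight fun i => (e i).toEquiv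
  continuous_toFun := continuous_sigma fun i => continuous_sigmaMk.comp (e i).continuous
  continuous_invFun := continuous_sigma fun i => continuous_sigmaMk.comp (e i).symm.continuous

/-- Sigma over a discrete index with constant fiber is the product. -/
def sigmaEquivProdHomeo {ι X : Type*} [TopologicalSpace ι] [DiscreteTopology ι]
    [TopologicalSpace X] : (Σ _ : ι, X) ≃ₜ ι × X := by
  refine Equiv.toHomeomorphOfContinuousOpen (Equiv.sigmaEquivProd ι X) ?_ ?_
  · exact continuous_sigma fun i => continuous_const.prodMk continuous_id
  · rw [isOpenMap_sigma]
    intro i U hU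
    have h : (fun a : X => ((i, a) : ι × X)) '' U = {i} ×ˢ U := by
      ext p
      simp only [Set.mem_image, Set.mem_prod, Set.mem_singleton_iff]
      constructor
      · rintro ⟨x, hx, rfl⟩; exact ⟨rfl, hx⟩
      · rintro ⟨h1, h2⟩; exact ⟨p.2, h2, by rw [← h1]⟩
    show IsOpen ((fun a : X => ((i, a) : ι × X)) '' U)
    rw [h]
    exact (isOpen_discrete _).prod hU

/-- sigmaSet is functorial under equivalences of the index set. -/
def sigmaSetCongr {Λ Λ' : Type*} (e : Λ ≃ Λ') : (sigmaSet Λ 1) ≃ₜ (sigmaSet Λ' 1) where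
  toFun y := ⟨fun b => (y : Λ → Bool) (e.symm b), by
    rw [mem_sigmaSet_one_iff]
    intro a b ha hb
    exact e.symm.injective ((mem_sigmaSet_one_iff _).mp y.2 _ _ ha hb)⟩
  invFun z := ⟨fun a => (z : Λ' → Bool) (e a), by
    rw [mem_sigmaSet_one_iff]
    intro a b ha hb
    exact e.injective ((mem_sigmaSet_one_iff _).mp z.2 _ _ ha hb)⟩
  left_inv y := by apply Subtype.ext; funext a; simp
  right_inv z := by apply Subtype.ext; funext b; simp
  continuous_toFun := by
    apply Continuous.subtype_mk
    exact continuous_pi fun b => (continuous_apply (e.symm b)).comp continuous_subtype_val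
  continuous_invFun := by
    apply Continuous.subtype_mk
    exact continuous_pi fun a => (continuous_apply (e a)).comp continuous_subtype_val

/-- Elements of `σ_1(Γ)` not containing `γ` are `σ_1` over the complement. -/
def sigmaSetAvoidHomeo (Γ : Type*) [DecidableEq Γ] (γ : Γ) :
    {y : sigmaSet Γ 1 // (y : Γ → Bool) γ = false} ≃ₜ sigmaSet {δ : Γ // δ ≠ γ} 1 where
  toFun y := ⟨fun δ => (y.1 : Γ → Bool) δ.1, by
    rw [mem_sigmaSet_one_iff]
    intro a b ha hb
    exact Subtype.ext ((mem_sigmaSet_one_iff _).mp y.1.2 _ _ ha hb)⟩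
  invFun z := ⟨⟨fun δ => if h : δ = γ then false else z.1 ⟨δ, h⟩, by
      rw [mem_sigmaSet_one_iff]
      intro a b ha hb
      by_cases hA : a = γ
      · rw [dif_pos hA] at ha; exact absurd ha (by simp)
      by_cases hB : b = γ
      · rw [dif_pos hB] at hb; exact absurd hb (by simp)
      rw [dif_neg hA] at ha
      rw [dif_neg hB] at hb
      exact congrArg Subtype.val ((mem_sigmaSet_one_iff _).mp z.2 _ _ ha hb)⟩,
    by simp⟩
  left_inv y := by
    apply Subtype.ext; apply Subtype.ext
    funext δ
    by_cases h : δ = γ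
    · subst h
      simp only [dif_pos rfl]
      exact y.2.symm
    · simp only [dif_neg h]
  right_inv z := by
    apply Subtype.ext
    funext δ
    simp only [dif_neg δ.2]
  continuous_toFun := by
    apply Continuous.subtype_mk
    exact continuous_pi fun δ =>
      (continuous_apply δ.1).comp (continuous_subtype_val.comp continuous_subtype_val)
  continuous_invFun := by
    apply Continuous.subtype_mk
    apply Continuous.subtype_mk
    apply continuous_pi
    intro δ
    by_cases h : δ = γ
    · simp only [dif_pos h]; exact continuous_const
    · simp only [dif_neg h]
      exact (continuous_apply (⟨δ, h⟩ : {δ : Γ // δ ≠ γ})).comp continuous_subtype_val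

/-- The index equivalence `ℕ ≃ {j : ℕ // j ≠ 0}`. -/
def natEquivNeZero : ℕ ≃ {j : ℕ // j ≠ 0} where
  toFun n := ⟨n + 1, Nat.succ_ne_zero n⟩
  invFun j := j.1 - 1
  left_inv n := by simp
  right_inv j := by
    apply Subtype.ext
    show j.1 - 1 + 1 = j.1
    have := j.2
    omega

/-- Prepending one coordinate: `A × A^ω ≃ₜ A^ω`. -/
def consHomeo (A : Type*) [TopologicalSpace A] : A × (ℕ → A) ≃ₜ (ℕ → A) :=
  (Homeomorph.prodCongr (Homeomorph.refl A)
    (Homeomorph.piCongrLeft (Y := fun _ : {j : ℕ // j ≠ 0} => A) natEquivNeZero)).trans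
    (Homeomorph.funSplitAt (ι := ℕ) (i := 0) A).symm

end Aux

section Main

variable {Γ : Type*} [DecidableEq Γ] (γ : Γ)

/-- `K_n` splits as (avoid-γ elements) × K. -/
def ksetSplitHomeo (n : ℕ) :
    ↥(Kset γ n) ≃ₜ {y : sigmaSet Γ 1 // (y : Γ → Bool) γ = false} × (ℕ → sigmaSet Γ 1) where
  toFun x := (⟨x.1 n, x.2.2⟩, fun k => x.1 (n + 1 + k))
  invFun p := ⟨fun j => if j < n then singElt γ else if j = n then p.1.1 else p.2 (j - (n + 1)),
    by
      refine ⟨fun j hj => ?_, ?_⟩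
      · simp only [if_pos hj]; exact singElt_coe γ
      · simp only [if_neg (lt_irrefl n), if_pos (rfl : n = n)]
        exact p.1.2⟩
  left_inv x := by
    apply Subtype.ext
    funext j
    dsimp only
    rcases lt_trichotomy j n with h | h | h
    · simp only [if_pos h]
      exact (eq_singElt (x.1 j) (x.2.1 j h)).symm
    · subst h
      rw [if_neg (lt_irrefl j), if_pos (rfl : j = j)]
    · have h1 : ¬ j < n := by omega
      have h2 : j ≠ n := by omega
      rw [if_neg h1, if_neg h2]
      have h3 : n + 1 + (j - (n + 1)) = j := by omega
      rw [h3]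
  right_inv p := by
    refine Prod.ext ?_ ?_
    · apply Subtype.ext
      show (if n < n then _ else if n = n then p.1.1 else _) = p.1.1
      rw [if_neg (lt_irrefl n), if_pos (rfl : n = n)]
    · funext k
      have h1 : ¬ n + 1 + k < n := by omega
      have h2 : n + 1 + k ≠ n := by omega
      show (if n + 1 + k < n then _ else if n + 1 + k = n then _ else p.2 (n + 1 + k - (n + 1)))
        = p.2 k
      rw [if_neg h1, if_neg h2]
      have h3 : n + 1 + k - (n + 1) = k := by omega
      rw [h3]
  continuous_toFun := by
    refine Continuous.prodMk ?_ ?_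
    · apply Continuous.subtype_mk
      exact (continuous_apply n).comp continuous_subtype_val
    · exact continuous_pi fun k => (continuous_apply (n + 1 + k)).comp continuous_subtype_val
  continuous_invFun := by
    apply Continuous.subtype_mk
    apply continuous_pi
    intro j
    by_cases h1 : j < n
    · simp only [if_pos h1]; exact continuous_const
    · by_cases h2 : j = n
      · simp only [if_neg h1, if_pos h2]
        exact continuous_subtype_val.comp continuous_fst
      · simp only [if_neg h1, if_neg h2]
        exact (continuous_apply (j - (n + 1))).comp continuous_snd

lemma nonempty_homeo_Kn [Infinite Γ] (n : ℕ) :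
    Nonempty (↥(Kset γ n) ≃ₜ (ℕ → sigmaSet Γ 1)) := by
  have hinf : Infinite {δ : Γ // δ ≠ γ} := ((Set.finite_singleton γ).infinite_compl).to_subtype
  obtain ⟨eo⟩ : Nonempty ({δ : Γ // δ ≠ γ} ≃ Option {δ : Γ // δ ≠ γ}) := by
    rw [← Cardinal.eq, Cardinal.mk_option]
    exact (Cardinal.add_one_eq (Cardinal.aleph0_le_mk _)).symm
  let e : {δ : Γ // δ ≠ γ} ≃ Γ := eo.trans (Equiv.optionSubtypeNe γ)
  exact ⟨(ksetSplitHomeo γ n).trans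
    ((Homeomorph.prodCongr ((sigmaSetAvoidHomeo Γ γ).trans (sigmaSetCongr e))
      (Homeomorph.refl _)).trans (consHomeo _))⟩

end Main

/-- The sets `K_n` are pairwise disjoint clopen subsets of `K = σ_1(Γ)^ω`, each homeomorphic
to `K`; their union is `K` minus the constant sequence `({γ},{γ},…)`, `K` is the one-point
compactification of their disjoint sum, and hence `K` is homeomorphic to the one-point
compactification of the sum of countably many copies of `K`. -/
theorem stmt_14 (Γ : Type*) [Infinite Γ] [DecidableEq Γ] (γ : Γ) :
    Pairwise (Function.onFun Disjoint (Kset γ)) ∧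
    (∀ n, IsClopen (Kset γ n)) ∧
    (∀ n, Nonempty ((Kset γ n) ≃ₜ (ℕ → (sigmaSet Γ 1)))) ∧
    (⋃ n, Kset γ n) = {(fun _ => singElt γ : ℕ → sigmaSet Γ 1)}ᶜ ∧
    Nonempty ((ℕ → (sigmaSet Γ 1)) ≃ₜ OnePoint (Σ n : ℕ, (Kset γ n))) ∧
    Nonempty ((ℕ → (sigmaSet Γ 1)) ≃ₜ OnePoint (ℕ × (ℕ → (sigmaSet Γ 1)))) := by
  classical
  have hdisj : Pairwise (Function.onFun Disjoint (Kset γ)) := by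
    have key : ∀ m n : ℕ, m < n → Disjoint (Kset γ m) (Kset γ n) := by
      intro m n hmn
      rw [Set.disjoint_left]
      rintro x ⟨h1, h2⟩ ⟨h3, h4⟩
      rw [h3 m hmn] at h2
      exact absurd h2 (by simp)
    intro m n hmn
    rcases lt_or_gt_of_ne hmn with h | h
    · exact key m n h
    · exact (key n m h).symm
  have hclopen : ∀ n, IsClopen (Kset γ n) := by
    intro n
    have hco : ∀ (j : ℕ) (b : Bool),
        IsClopen {x : ℕ → sigmaSet Γ 1 | (x j : Γ → Bool) γ = b} := by
      intro j b
      have hc : Continuous fun x : ℕ → sigmaSet Γ 1 => (x j : Γ → Bool) γ :=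
        (continuous_apply γ).comp (continuous_subtype_val.comp (continuous_apply j))
      show IsClopen ((fun x : ℕ → sigmaSet Γ 1 => (x j : Γ → Bool) γ) ⁻¹' {b})
      exact (isClopen_discrete _).preimage hc
    have heq : Kset γ n =
        (⋂ j ∈ Finset.range n, {x : ℕ → sigmaSet Γ 1 | (x j : Γ → Bool) γ = true}) ∩
          {x : ℕ → sigmaSet Γ 1 | (x n : Γ → Bool) γ = false} := by
      ext x
      simp only [Kset, Set.mem_setOf_eq, Set.mem_inter_iff, Set.mem_iInter, Finset.mem_range]
    rw [heq]
    exact (isClopen_biInter_finset fun j _ => hco j true).inter (hco n false)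
  have hunion : (⋃ n, Kset γ n) = {(fun _ => singElt γ : ℕ → sigmaSet Γ 1)}ᶜ := by
    ext x
    simp only [Set.mem_iUnion, Set.mem_compl_iff, Set.mem_singleton_iff]
    constructor
    · rintro ⟨n, h1, h2⟩ heq
      rw [heq] at h2
      show False
      rw [show ((fun _ : ℕ => singElt γ) n : Γ → Bool) γ = true from singElt_coe γ] at h2
      exact absurd h2 (by simp)
    · intro hne
      have hex : ∃ n, (x n : Γ → Bool) γ = false := by
        by_contra hcon
        push_neg at hcon
        apply hne
        funext j
        have hj : (x j : Γ → Bool) γ = true := by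
          cases hxj : (x j : Γ → Bool) γ
          · exact absurd hxj (hcon j)
          · rfl
        exact eq_singElt (x j) hj
      refine ⟨Nat.find hex, fun j hj => ?_, Nat.find_spec hex⟩
      have hm := Nat.find_min hex hj
      cases hxj : (x j : Γ → Bool) γ
      · exact absurd hxj hm
      · rfl
  have h3 : ∀ n, Nonempty ((Kset γ n) ≃ₜ (ℕ → (sigmaSet Γ 1))) := nonempty_homeo_Kn γ
  have h5 : Nonempty ((ℕ → (sigmaSet Γ 1)) ≃ₜ OnePoint (Σ n : ℕ, (Kset γ n))) := by
    let f : (Σ n : ℕ, Kset γ n) → (ℕ → sigmaSet Γ 1) := fun q => q.2.1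
    have hcont : Continuous f := continuous_sigma fun n => continuous_subtype_val
    have hinj : Function.Injective f := by
      rintro ⟨m, x, hx⟩ ⟨n, y, hy⟩ h
      dsimp only [f] at h
      have hmn : m = n := by
        by_contra hne
        exact Set.disjoint_left.mp (hdisj hne) hx (h ▸ hy)
      subst hmn
      exact congrArg (Sigma.mk m) (Subtype.ext h)
    have hopen : IsOpenMap f := by
      rw [isOpenMap_sigma]
      intro n
      exact (hclopen n).2.isOpenMap_subtype_val
    have hemb : Topology.IsEmbedding f :=
      (Topology.IsOpenEmbedding.of_continuous_injective_isOpenMap hcont hinj hopen).toIsEmbedding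
    have hrange : Set.range f = {(fun _ => singElt γ : ℕ → sigmaSet Γ 1)}ᶜ := by
      rw [← hunion]
      ext x
      constructor
      · rintro ⟨⟨n, y⟩, rfl⟩
        exact Set.mem_iUnion.mpr ⟨n, y.2⟩
      · intro hx
        obtain ⟨n, hn⟩ := Set.mem_iUnion.mp hx
        exact ⟨⟨n, ⟨x, hn⟩⟩, rfl⟩
    exact ⟨(OnePoint.equivOfIsEmbeddingOfRangeEq _ f hemb hrange).symm⟩
  have h6 : Nonempty ((ℕ → (sigmaSet Γ 1)) ≃ₜ OnePoint (ℕ × (ℕ → (sigmaSet Γ 1)))) := by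
    obtain ⟨h⟩ := h5
    have e1 : (Σ n : ℕ, Kset γ n) ≃ₜ (ℕ × (ℕ → sigmaSet Γ 1)) :=
      (sigmaCongrRightHomeo fun n => Classical.choice (h3 n)).trans sigmaEquivProdHomeo
    exact ⟨h.trans (Homeomorph.onePointCongr e1)⟩
  exact ⟨hdisj, hclopen, h3, hunion, h5, h6⟩
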